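/- The category Rep_k(Q1) has RP property 1 and RP property 2 with respect to its unique Ext-nontrivial couple {M, M'}. Concretely: (RP property 1) for every exceptional representation X of Q1, if hom(M,X) = 0 and ext1(M,X) = 0 then hom(X,M') = 0 and ext1(X,M') = 0, and if hom(M',X) = 0 and ext1(M',X) = 0 then hom(X,M) = 0 and ext1(X,M) = 0. (RP property 2) for all exceptional representations X, Y of Q1: if hom(M,X) ≠ 0, hom(X,Y) ≠ 0, hom(M,Y) = 0 and ext1(M,Y) = 0, then hom(M',Y) ≠ 0; and if hom(M',X) ≠ 0, hom(X,Y) ≠ 0, hom(M',Y) = 0 and ext1(M',Y) = 0, then hom(M,Y) ≠ 0. -/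

import Mathlib

noncomputable section

open Module

universe u

/-- A representation of the quiver `Q1` (vertices 1, 2, 3; arrows 1→3, 1→2, 2→3)
over the field `k`, with finite-dimensional vector spaces at the vertices. -/
structure RepQ1 (k : Type u) [Field k] where
  V1 : Type u
  V2 : Type u
  V3 : Type u
  [acg1 : AddCommGroup V1]
  [acg2 : AddCommGroup V2]
  [acg3 : AddCommGroup V3]
  [mod1 : Module k V1]
  [mod2 : Module k V2]
  [mod3 : Module k V3]
  [fd1 : FiniteDimensional k V1]
  [fd2 : FiniteDimensional k V2]
  [fd3 : FiniteDimensional k V3]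
  r13 : V1 →ₗ[k] V3
  r12 : V1 →ₗ[k] V2
  r23 : V2 →ₗ[k] V3

attribute [instance] RepQ1.acg1 RepQ1.acg2 RepQ1.acg3 RepQ1.mod1 RepQ1.mod2 RepQ1.mod3
  RepQ1.fd1 RepQ1.fd2 RepQ1.fd3

namespace RepQ1

variable {k : Type u} [Field k]

/-- The space of morphisms of representations `ρ → ρ'`:
triples `(f₁, f₂, f₃)` of linear maps commuting with the structure maps. -/
def homSpace (ρ ρ' : RepQ1 k) :
    Submodule k ((ρ.V1 →ₗ[k] ρ'.V1) × (ρ.V2 →ₗ[k] ρ'.V2) × (ρ.V3 →ₗ[k] ρ'.V3)) where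
  carrier := { f | f.2.2 ∘ₗ ρ.r13 = ρ'.r13 ∘ₗ f.1 ∧
                   f.2.1 ∘ₗ ρ.r12 = ρ'.r12 ∘ₗ f.1 ∧
                   f.2.2 ∘ₗ ρ.r23 = ρ'.r23 ∘ₗ f.2.1 }
  add_mem' := by
    rintro f g ⟨h1, h2, h3⟩ ⟨h1', h2', h3'⟩
    refine ⟨?_, ?_, ?_⟩ <;>
      simp only [Prod.fst_add, Prod.snd_add, LinearMap.add_comp, LinearMap.comp_add,
        h1, h2, h3, h1', h2', h3']
  zero_mem' := by
    refine ⟨?_, ?_, ?_⟩ <;> simp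
  smul_mem' := by
    rintro c f ⟨h1, h2, h3⟩
    refine ⟨?_, ?_, ?_⟩ <;>
      simp only [Prod.smul_fst, Prod.smul_snd, LinearMap.smul_comp, LinearMap.comp_smul,
        h1, h2, h3]

/-- `hom ρ ρ'` is the `k`-dimension of the space of morphisms of representations `ρ → ρ'`. -/
def hom (ρ ρ' : RepQ1 k) : ℕ := finrank k (homSpace ρ ρ')

/-- The linear map `Φ` whose cokernel computes `Ext¹(ρ, ρ')`. -/
def phi (ρ ρ' : RepQ1 k) :
    ((ρ.V1 →ₗ[k] ρ'.V1) × (ρ.V2 →ₗ[k] ρ'.V2) × (ρ.V3 →ₗ[k] ρ'.V3)) →ₗ[k]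
      ((ρ.V1 →ₗ[k] ρ'.V3) × (ρ.V1 →ₗ[k] ρ'.V2) × (ρ.V2 →ₗ[k] ρ'.V3)) where
  toFun g := (g.2.2 ∘ₗ ρ.r13 - ρ'.r13 ∘ₗ g.1,
              g.2.1 ∘ₗ ρ.r12 - ρ'.r12 ∘ₗ g.1,
              g.2.2 ∘ₗ ρ.r23 - ρ'.r23 ∘ₗ g.2.1)
  map_add' g h := by
    refine Prod.ext ?_ (Prod.ext ?_ ?_) <;>
      · simp only [Prod.fst_add, Prod.snd_add, LinearMap.add_comp, LinearMap.comp_add]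
        abel
  map_smul' c g := by
    refine Prod.ext ?_ (Prod.ext ?_ ?_) <;>
      simp [LinearMap.smul_comp, LinearMap.comp_smul, smul_sub]

/-- `ext1 ρ ρ'` is the `k`-dimension of the cokernel of `Φ`; it equals
`dim Ext¹(ρ, ρ')` in the abelian category of representations of `Q1`. -/
def ext1 (ρ ρ' : RepQ1 k) : ℕ :=
  finrank k (((ρ.V1 →ₗ[k] ρ'.V3) × (ρ.V1 →ₗ[k] ρ'.V2) × (ρ.V2 →ₗ[k] ρ'.V3)) ⧸
    LinearMap.range (phi ρ ρ'))

/-- A representation is exceptional if `hom ρ ρ = 1` and `ext1 ρ ρ = 0`. -/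
def IsExceptional (ρ : RepQ1 k) : Prop := hom ρ ρ = 1 ∧ ext1 ρ ρ = 0

/-- Isomorphism of representations of `Q1`. -/
def Iso (ρ ρ' : RepQ1 k) : Prop :=
  ∃ (e1 : ρ.V1 ≃ₗ[k] ρ'.V1) (e2 : ρ.V2 ≃ₗ[k] ρ'.V2) (e3 : ρ.V3 ≃ₗ[k] ρ'.V3),
    e3.toLinearMap ∘ₗ ρ.r13 = ρ'.r13 ∘ₗ e1.toLinearMap ∧
    e2.toLinearMap ∘ₗ ρ.r12 = ρ'.r12 ∘ₗ e1.toLinearMap ∧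
    e3.toLinearMap ∘ₗ ρ.r23 = ρ'.r23 ∘ₗ e2.toLinearMap

end RepQ1

variable (k : Type u) [Field k]

/-- `π₊^m : k^{m+1} → k^m`, `(a₁,…,a_{m+1}) ↦ (a₁,…,a_m)`. -/
def piPlus (m : ℕ) : (Fin (m + 1) → k) →ₗ[k] (Fin m → k) :=
  LinearMap.funLeft k k Fin.castSucc

/-- `π₋^m : k^{m+1} → k^m`, `(a₁,…,a_{m+1}) ↦ (a₂,…,a_{m+1})`. -/
def piMinus (m : ℕ) : (Fin (m + 1) → k) →ₗ[k] (Fin m → k) :=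
  LinearMap.funLeft k k Fin.succ

/-- `j₊^m : k^m → k^{m+1}`, `(a₁,…,a_m) ↦ (a₁,…,a_m,0)`. -/
def jPlus (m : ℕ) : (Fin m → k) →ₗ[k] (Fin (m + 1) → k) where
  toFun a := Fin.snoc a 0
  map_add' a b := by
    ext i
    induction i using Fin.lastCases <;> simp
  map_smul' c a := by
    ext i
    induction i using Fin.lastCases <;> simp

/-- `j₋^m : k^m → k^{m+1}`, `(a₁,…,a_m) ↦ (0,a₁,…,a_m)`. -/
def jMinus (m : ℕ) : (Fin m → k) →ₗ[k] (Fin (m + 1) → k) where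
  toFun a := Fin.cons 0 a
  map_add' a b := by
    ext i
    induction i using Fin.cases <;> simp
  map_smul' c a := by
    ext i
    induction i using Fin.cases <;> simp

/-- The representation `E₁^m = (k^{m+1}, k^m, k^m)` with `ρ₁₃ = π₊^m`, `ρ₁₂ = π₋^m`, `ρ₂₃ = id`. -/
def E1 (m : ℕ) : RepQ1 k where
  V1 := Fin (m + 1) → k
  V2 := Fin m → k
  V3 := Fin m → k
  r13 := piPlus k m
  r12 := piMinus k m
  r23 := LinearMap.id

/-- The representation `E₂^m = (k^m, k^{m+1}, k^{m+1})` with `ρ₁₃ = j₊^m`, `ρ₁₂ = j₋^m`, `ρ₂₃ = id`. -/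
def E2 (m : ℕ) : RepQ1 k where
  V1 := Fin m → k
  V2 := Fin (m + 1) → k
  V3 := Fin (m + 1) → k
  r13 := jPlus k m
  r12 := jMinus k m
  r23 := LinearMap.id

/-- The representation `E₃^m = (k^m, k^m, k^{m+1})` with `ρ₁₃ = j₊^m`, `ρ₁₂ = id`, `ρ₂₃ = j₋^m`. -/
def E3 (m : ℕ) : RepQ1 k where
  V1 := Fin m → k
  V2 := Fin m → k
  V3 := Fin (m + 1) → k
  r13 := jPlus k m
  r12 := LinearMap.id
  r23 := jMinus k m

/-- The representation `E₄^m = (k^{m+1}, k^{m+1}, k^m)` with `ρ₁₃ = π₊^m`, `ρ₁₂ = id`, `ρ₂₃ = π₋^m`. -/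
def E4 (m : ℕ) : RepQ1 k where
  V1 := Fin (m + 1) → k
  V2 := Fin (m + 1) → k
  V3 := Fin m → k
  r13 := piPlus k m
  r12 := LinearMap.id
  r23 := piMinus k m

/-- The representation `M = (0, k, 0)` with zero structure maps. -/
def Mrep : RepQ1 k where
  V1 := Fin 0 → k
  V2 := Fin 1 → k
  V3 := Fin 0 → k
  r13 := 0
  r12 := 0
  r23 := 0

/-- The representation `M' = (k, 0, k)` with `ρ₁₃ = id` and the other structure maps zero. -/
def Mprep : RepQ1 k where
  V1 := Fin 1 → k
  V2 := Fin 0 → k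
  V3 := Fin 1 → k
  r13 := LinearMap.id
  r12 := 0
  r23 := 0

namespace RepQ1

variable {k : Type u} [Field k]

/-- An exceptional pair `(X, Y)`: both `X` and `Y` are exceptional and
`hom (Y, X) = 0` and `ext1 (Y, X) = 0`. -/
def IsExceptionalPair (X Y : RepQ1 k) : Prop :=
  X.IsExceptional ∧ Y.IsExceptional ∧ hom Y X = 0 ∧ ext1 Y X = 0

/-- An exceptional triple `(A, B, C)`: `(A,B)`, `(B,C)` and `(A,C)` are exceptional pairs. -/
def IsExceptionalTriple (A B C : RepQ1 k) : Prop :=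
  IsExceptionalPair A B ∧ IsExceptionalPair B C ∧ IsExceptionalPair A C

/-- A morphism of representations of `Q1`. -/
structure Homo (ρ ρ' : RepQ1 k) where
  f1 : ρ.V1 →ₗ[k] ρ'.V1
  f2 : ρ.V2 →ₗ[k] ρ'.V2
  f3 : ρ.V3 →ₗ[k] ρ'.V3
  comm13 : f3 ∘ₗ ρ.r13 = ρ'.r13 ∘ₗ f1
  comm12 : f2 ∘ₗ ρ.r12 = ρ'.r12 ∘ₗ f1
  comm23 : f3 ∘ₗ ρ.r23 = ρ'.r23 ∘ₗ f2

/-- `0 → A → C → B → 0` is a short exact sequence of representations of `Q1`: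
at each vertex the induced sequence of vector spaces is short exact. -/
def IsSES {A C B : RepQ1 k} (f : Homo A C) (g : Homo C B) : Prop :=
  Function.Injective f.f1 ∧ Function.Injective f.f2 ∧ Function.Injective f.f3 ∧
  Function.Surjective g.f1 ∧ Function.Surjective g.f2 ∧ Function.Surjective g.f3 ∧
  LinearMap.range f.f1 = LinearMap.ker g.f1 ∧
  LinearMap.range f.f2 = LinearMap.ker g.f2 ∧
  LinearMap.range f.f3 = LinearMap.ker g.f3

/-- A representation is zero when all its vector spaces are zero. -/
def IsZeroRep (ρ : RepQ1 k) : Prop :=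
  Subsingleton ρ.V1 ∧ Subsingleton ρ.V2 ∧ Subsingleton ρ.V3

end RepQ1

/-- The (vertexwise) direct sum of two representations of `Q1`. -/
def RepQ1.dsum {k : Type u} [Field k] (ρ σ : RepQ1 k) : RepQ1 k where
  V1 := ρ.V1 × σ.V1
  V2 := ρ.V2 × σ.V2
  V3 := ρ.V3 × σ.V3
  r13 := ρ.r13.prodMap σ.r13
  r12 := ρ.r12.prodMap σ.r12
  r23 := ρ.r23.prodMap σ.r23

section Helpers

open Module Function LinearMap

namespace RepQ1

variable {k : Type u} [Field k]

lemma mem_homSpace {ρ ρ' : RepQ1 k}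
    {f : (ρ.V1 →ₗ[k] ρ'.V1) × (ρ.V2 →ₗ[k] ρ'.V2) × (ρ.V3 →ₗ[k] ρ'.V3)} :
    f ∈ homSpace ρ ρ' ↔ (f.2.2 ∘ₗ ρ.r13 = ρ'.r13 ∘ₗ f.1 ∧
                   f.2.1 ∘ₗ ρ.r12 = ρ'.r12 ∘ₗ f.1 ∧
                   f.2.2 ∘ₗ ρ.r23 = ρ'.r23 ∘ₗ f.2.1) := Iff.rfl

lemma homSpace_eq_ker (ρ ρ' : RepQ1 k) : homSpace ρ ρ' = LinearMap.ker (phi ρ ρ') := by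
  ext f
  simp only [mem_homSpace, LinearMap.mem_ker, phi, LinearMap.coe_mk, AddHom.coe_mk,
    Prod.mk_eq_zero, sub_eq_zero]

lemma hom_eq_finrank_ker (ρ ρ' : RepQ1 k) :
    hom ρ ρ' = finrank k (LinearMap.ker (phi ρ ρ')) := by
  rw [hom, homSpace_eq_ker]

/-- The Euler form identity. -/
lemma euler (ρ ρ' : RepQ1 k) :
    hom ρ ρ' + (finrank k ρ.V1 * finrank k ρ'.V3 + finrank k ρ.V1 * finrank k ρ'.V2
      + finrank k ρ.V2 * finrank k ρ'.V3)
    = ext1 ρ ρ' + (finrank k ρ.V1 * finrank k ρ'.V1 + finrank k ρ.V2 * finrank k ρ'.V2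
      + finrank k ρ.V3 * finrank k ρ'.V3) := by
  have hdom : finrank k ((ρ.V1 →ₗ[k] ρ'.V1) × (ρ.V2 →ₗ[k] ρ'.V2) × (ρ.V3 →ₗ[k] ρ'.V3))
      = finrank k ρ.V1 * finrank k ρ'.V1 + finrank k ρ.V2 * finrank k ρ'.V2
      + finrank k ρ.V3 * finrank k ρ'.V3 := by
    rw [Module.finrank_prod, Module.finrank_prod,
      Module.finrank_linearMap, Module.finrank_linearMap, Module.finrank_linearMap]
    ring
  have hcod : finrank k ((ρ.V1 →ₗ[k] ρ'.V3) × (ρ.V1 →ₗ[k] ρ'.V2) × (ρ.V2 →ₗ[k] ρ'.V3))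
      = finrank k ρ.V1 * finrank k ρ'.V3 + finrank k ρ.V1 * finrank k ρ'.V2
      + finrank k ρ.V2 * finrank k ρ'.V3 := by
    rw [Module.finrank_prod, Module.finrank_prod,
      Module.finrank_linearMap, Module.finrank_linearMap, Module.finrank_linearMap]
    ring
  have h1 := LinearMap.finrank_range_add_finrank_ker (phi ρ ρ')
  have h2 := Submodule.finrank_quotient_add_finrank (LinearMap.range (phi ρ ρ'))
  rw [hdom] at h1
  rw [hcod] at h2
  rw [hom_eq_finrank_ker, ext1]
  omega

/-- If `ext1 ρ ρ' = 0` then `phi ρ ρ'` is surjective. -/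
lemma phi_surjective_of_ext1_eq_zero {ρ ρ' : RepQ1 k} (h : ext1 ρ ρ' = 0) :
    Surjective (phi ρ ρ') := by
  rw [← LinearMap.range_eq_top]
  have h2 := Submodule.finrank_quotient_add_finrank (LinearMap.range (phi ρ ρ'))
  rw [ext1] at h
  rw [h, zero_add] at h2
  exact Submodule.eq_top_of_finrank_eq h2

lemma hom_ne_zero_of_mem {ρ ρ' : RepQ1 k}
    {f : (ρ.V1 →ₗ[k] ρ'.V1) × (ρ.V2 →ₗ[k] ρ'.V2) × (ρ.V3 →ₗ[k] ρ'.V3)}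
    (hf : f ∈ homSpace ρ ρ') (hne : f ≠ 0) : hom ρ ρ' ≠ 0 := by
  intro h
  rw [hom] at h
  rw [Submodule.finrank_eq_zero] at h
  exact hne ((Submodule.eq_bot_iff _).mp h f hf)

lemma hom_eq_zero_of_forall {ρ ρ' : RepQ1 k}
    (h : ∀ f ∈ homSpace ρ ρ', f = 0) : hom ρ ρ' = 0 := by
  rw [hom, Submodule.finrank_eq_zero]
  exact (Submodule.eq_bot_iff _).mpr h

lemma exists_nonzero_hom {ρ ρ' : RepQ1 k} (h : hom ρ ρ' ≠ 0) :
    ∃ f ∈ homSpace ρ ρ', f ≠ 0 := by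
  by_contra hc
  push_neg at hc
  exact h (hom_eq_zero_of_forall hc)

/-- The identity endomorphism triple. -/
def idT (ρ : RepQ1 k) : (ρ.V1 →ₗ[k] ρ.V1) × (ρ.V2 →ₗ[k] ρ.V2) × (ρ.V3 →ₗ[k] ρ.V3) :=
  (LinearMap.id, LinearMap.id, LinearMap.id)

lemma idT_mem (ρ : RepQ1 k) : idT ρ ∈ homSpace ρ ρ := by
  refine ⟨?_, ?_, ?_⟩ <;> simp [idT]

/-- In a brick, every endomorphism is a scalar multiple of the identity. -/
lemma brick_scalar {ρ : RepQ1 k} (hb : hom ρ ρ = 1) (hne : idT ρ ≠ 0)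
    {f : (ρ.V1 →ₗ[k] ρ.V1) × (ρ.V2 →ₗ[k] ρ.V2) × (ρ.V3 →ₗ[k] ρ.V3)}
    (hf : f ∈ homSpace ρ ρ) : ∃ c : k, f = c • idT ρ := by
  have hle : Submodule.span k {idT ρ} ≤ homSpace ρ ρ := by
    rw [Submodule.span_le, Set.singleton_subset_iff]
    exact idT_mem ρ
  have heq : Submodule.span k {idT ρ} = homSpace ρ ρ := by
    refine Submodule.eq_of_le_of_finrank_le hle ?_
    rw [← hom] at *
    rw [hb, finrank_span_singleton hne]
  rw [← heq] at hf
  obtain ⟨c, hc⟩ := Submodule.mem_span_singleton.mp hf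
  exact ⟨c, hc.symm⟩

/-- For a nonzero vector there is a functional taking value 1 on it. -/
lemma exists_dual_one {V : Type u} [AddCommGroup V] [Module k V]
    {v : V} (hv : v ≠ 0) : ∃ φ : V →ₗ[k] k, φ v = 1 := by
  have := (not_iff_not.mpr (Module.forall_dual_apply_eq_zero_iff k v)).mpr hv
  push_neg at this
  obtain ⟨φ, hφ⟩ := this
  exact ⟨(φ v)⁻¹ • φ, by simp [inv_mul_cancel₀ hφ]⟩

/-- A non-surjective linear map is killed by a nonzero functional. -/
lemma exists_ann_of_not_surj {V W : Type u} [AddCommGroup V] [Module k V]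
    [AddCommGroup W] [Module k W]
    {f : V →ₗ[k] W} (h : Surjective f → False) : ∃ χ : W →ₗ[k] k, χ ≠ 0 ∧ χ ∘ₗ f = 0 := by
  have hlt : LinearMap.range f < ⊤ := by
    rcases lt_or_eq_of_le (le_top : LinearMap.range f ≤ ⊤) with h' | h'
    · exact h'
    · exact absurd (LinearMap.range_eq_top.mp h') h
  have : Nontrivial (W ⧸ LinearMap.range f) := Submodule.Quotient.nontrivial_iff.mpr hlt.ne
  obtain ⟨q, hq⟩ := exists_ne (0 : W ⧸ LinearMap.range f)
  obtain ⟨φ, hφ⟩ := exists_dual_one (k := k) hq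
  refine ⟨φ ∘ₗ (LinearMap.range f).mkQ, ?_, ?_⟩
  · intro hz
    obtain ⟨y, hy⟩ := (LinearMap.range f).mkQ_surjective q
    have h0 : (φ ∘ₗ (LinearMap.range f).mkQ) y = 0 := by rw [hz]; rfl
    rw [LinearMap.comp_apply, hy, hφ] at h0
    exact one_ne_zero h0
  · ext x
    simp only [LinearMap.comp_apply, LinearMap.zero_apply]
    have : (LinearMap.range f).mkQ (f x) = 0 := by
      rw [Submodule.mkQ_apply, Submodule.Quotient.mk_eq_zero]
      exact LinearMap.mem_range_self f x
    rw [this, map_zero]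

/-- rank-nullity for a nonzero functional. -/
lemma finrank_ker_dual {V : Type u} [AddCommGroup V] [Module k V] [FiniteDimensional k V]
    {χ : V →ₗ[k] k} (hχ : χ ≠ 0) :
    finrank k (LinearMap.ker χ) + 1 = finrank k V := by
  have hr : LinearMap.range χ = ⊤ := by
    have : ∃ x, χ x ≠ 0 := by
      by_contra hc
      push_neg at hc
      exact hχ (LinearMap.ext fun x => hc x)
    obtain ⟨x, hx⟩ := this
    rw [Submodule.eq_top_iff']
    intro c
    exact ⟨(c * (χ x)⁻¹) • x, by simp [mul_assoc, inv_mul_cancel₀ hx]⟩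
  have h1 := LinearMap.finrank_range_add_finrank_ker χ
  rw [hr, finrank_top, Module.finrank_self] at h1
  omega

end RepQ1
end Helpers
section MLemmas

open Module Function LinearMap

namespace RepQ1

variable {k : Type u} [Field k]

lemma lmap_eq_of_subsingleton_dom {V W : Type u} [AddCommGroup V] [Module k V]
    [AddCommGroup W] [Module k W] [Subsingleton V] (f g : V →ₗ[k] W) : f = g := by
  ext x
  rw [Subsingleton.elim x 0, map_zero, map_zero]

lemma phi_apply (ρ ρ' : RepQ1 k)
    (g : (ρ.V1 →ₗ[k] ρ'.V1) × (ρ.V2 →ₗ[k] ρ'.V2) × (ρ.V3 →ₗ[k] ρ'.V3)) :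
    phi ρ ρ' g = (g.2.2 ∘ₗ ρ.r13 - ρ'.r13 ∘ₗ g.1,
              g.2.1 ∘ₗ ρ.r12 - ρ'.r12 ∘ₗ g.1,
              g.2.2 ∘ₗ ρ.r23 - ρ'.r23 ∘ₗ g.2.1) := rfl

lemma ext1_eq_zero_of_phi_surjective {ρ ρ' : RepQ1 k} (h : Surjective (phi ρ ρ')) :
    ext1 ρ ρ' = 0 := by
  rw [ext1]
  rw [LinearMap.range_eq_top.mpr h]
  have : Subsingleton (((ρ.V1 →ₗ[k] ρ'.V3) × (ρ.V1 →ₗ[k] ρ'.V2) × (ρ.V2 →ₗ[k] ρ'.V3)) ⧸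
      (⊤ : Submodule k _)) :=
    Submodule.Quotient.subsingleton_iff.mpr rfl
  exact finrank_zero_of_subsingleton

instance : Subsingleton (Mrep k).V1 := inferInstanceAs (Subsingleton (Fin 0 → k))
instance : Subsingleton (Mrep k).V3 := inferInstanceAs (Subsingleton (Fin 0 → k))
instance : Subsingleton (Mprep k).V2 := inferInstanceAs (Subsingleton (Fin 0 → k))

/-- the vector (1) in the middle space of `M`. -/
def oneM : (Mrep k).V2 := fun _ => 1

/-- the projection from the middle space of `M` to `k`. -/
def prjM : (Mrep k).V2 →ₗ[k] k := LinearMap.proj 0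

lemma prjM_one : prjM (k := k) oneM = 1 := rfl

def oneP1 : (Mprep k).V1 := fun _ => 1
def prjP1 : (Mprep k).V1 →ₗ[k] k := LinearMap.proj 0
lemma prjP1_one : prjP1 (k := k) oneP1 = 1 := rfl
def oneP3 : (Mprep k).V3 := fun _ => 1
def prjP3 : (Mprep k).V3 →ₗ[k] k := LinearMap.proj 0
lemma prjP3_one : prjP3 (k := k) oneP3 = 1 := rfl

/-- A1: `hom(M, X) = 0` iff `ρ23` is injective. -/
lemma hom_Mrep_eq_zero_iff (X : RepQ1 k) : hom (Mrep k) X = 0 ↔ Injective X.r23 := by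
  constructor
  · intro h
    by_contra hni
    have hker : LinearMap.ker X.r23 ≠ ⊥ := fun hk => hni (LinearMap.ker_eq_bot.mp hk)
    obtain ⟨v, hvmem, hv⟩ := Submodule.exists_mem_ne_zero_of_ne_bot hker
    have hv23 : X.r23 v = 0 := hvmem
    have hm : ((0 : (Mrep k).V1 →ₗ[k] X.V1), (prjM (k := k)).smulRight v,
        (0 : (Mrep k).V3 →ₗ[k] X.V3)) ∈ homSpace (Mrep k) X := by
      refine ⟨lmap_eq_of_subsingleton_dom _ _, lmap_eq_of_subsingleton_dom _ _, ?_⟩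
      ext x
      simp only [LinearMap.comp_apply, LinearMap.zero_apply, LinearMap.smulRight_apply,
        map_smul, hv23, smul_zero]
    refine hom_ne_zero_of_mem hm ?_ h
    intro hz
    have h1 := congrArg (fun p => p.2.1 oneM) hz
    simp only [LinearMap.smulRight_apply, prjM_one, one_smul, Prod.snd_zero, Prod.fst_zero,
      LinearMap.zero_apply] at h1
    exact hv h1
  · intro hinj
    refine hom_eq_zero_of_forall ?_
    rintro ⟨f1, f2, f3⟩ ⟨h13, h12, h23⟩
    have hf2 : f2 = 0 := by
      ext x
      have hx := congrArg (fun g => g x) h23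
      simp only [LinearMap.comp_apply] at hx
      rw [Subsingleton.elim ((Mrep k).r23 x) 0, map_zero] at hx
      rw [LinearMap.zero_apply]
      exact hinj (show X.r23 (f2 x) = X.r23 0 by rw [map_zero, ← hx])
    refine Prod.ext (lmap_eq_of_subsingleton_dom _ _) (Prod.ext hf2 ?_)
    exact lmap_eq_of_subsingleton_dom _ _

/-- A2: if `ext1(M, X) = 0` then `ρ23` is surjective. -/
lemma r23_surjective_of_ext1_Mrep (X : RepQ1 k) (h : ext1 (Mrep k) X = 0) :
    Surjective X.r23 := by
  have hs := phi_surjective_of_ext1_eq_zero h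
  intro w
  obtain ⟨g, hg⟩ := hs (0, 0, (prjM (k := k)).smulRight w)
  have h3 := congrArg (fun p => p.2.2 oneM) hg
  simp only [phi_apply, LinearMap.sub_apply, LinearMap.comp_apply,
    LinearMap.smulRight_apply, prjM_one, one_smul] at h3
  rw [Subsingleton.elim ((Mrep k).r23 oneM) 0, map_zero, zero_sub] at h3
  exact ⟨-(g.2.1 oneM), by rw [map_neg, h3]⟩

/-- A3: if `ρ23` is bijective then `hom(X, M') = 0` and `ext1(X, M') = 0`. -/
lemma hom_ext1_Mprep_eq_zero (X : RepQ1 k) (hi : Injective X.r23) (hs : Surjective X.r23) :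
    hom X (Mprep k) = 0 ∧ ext1 X (Mprep k) = 0 := by
  obtain ⟨E, hE⟩ : ∃ E : X.V2 ≃ₗ[k] X.V3, ∀ x, E x = X.r23 x :=
    ⟨LinearEquiv.ofBijective X.r23 ⟨hi, hs⟩, fun _ => rfl⟩
  constructor
  · refine hom_eq_zero_of_forall ?_
    rintro ⟨f1, f2, f3⟩ ⟨h13, h12, h23⟩
    have hf3 : f3 = 0 := by
      ext y
      obtain ⟨x, rfl⟩ := hs y
      have hx := congrArg (fun g => g x) h23
      simp only [LinearMap.comp_apply] at hx
      rw [hx, Subsingleton.elim (f2 x) 0, map_zero, LinearMap.zero_apply]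
    have hf1 : f1 = 0 := by
      ext x
      have hx := congrArg (fun g => g x) h13
      simp only [LinearMap.comp_apply] at hx
      rw [hf3, LinearMap.zero_apply] at hx
      have : (Mprep k).r13 (f1 x) = f1 x := rfl
      rw [this] at hx
      rw [LinearMap.zero_apply, ← hx]
      rfl
    exact Prod.ext hf1 (Prod.ext (Subsingleton.elim _ _) hf3)
  · refine ext1_eq_zero_of_phi_surjective ?_
    rintro ⟨t1, t2, t3⟩
    refine ⟨(t3 ∘ₗ E.symm.toLinearMap ∘ₗ X.r13 - t1, 0, t3 ∘ₗ E.symm.toLinearMap), ?_⟩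
    rw [phi_apply]
    refine Prod.ext ?_ (Prod.ext (Subsingleton.elim _ _) ?_) <;> simp only
    · have : (Mprep k).r13 ∘ₗ (t3 ∘ₗ E.symm.toLinearMap ∘ₗ X.r13 - t1)
          = t3 ∘ₗ E.symm.toLinearMap ∘ₗ X.r13 - t1 := rfl
      rw [this]
      ext x
      simp only [LinearMap.comp_apply, LinearMap.sub_apply, sub_sub_cancel]
    · rw [LinearMap.comp_zero, sub_zero]
      ext x
      simp only [LinearMap.comp_apply]
      rw [show E.symm.toLinearMap (X.r23 x) = x from E.symm_apply_eq.mpr (hE x).symm]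

/-- B1: `hom(M', X) = 0` iff `ρ12` is injective. -/
lemma hom_Mprep_eq_zero_iff (X : RepQ1 k) : hom (Mprep k) X = 0 ↔ Injective X.r12 := by
  constructor
  · intro h
    by_contra hni
    have hker : LinearMap.ker X.r12 ≠ ⊥ := fun hk => hni (LinearMap.ker_eq_bot.mp hk)
    obtain ⟨u, humem, hu⟩ := Submodule.exists_mem_ne_zero_of_ne_bot hker
    have hu12 : X.r12 u = 0 := humem
    have hm : ((prjP1 (k := k)).smulRight u, (0 : (Mprep k).V2 →ₗ[k] X.V2),
        (prjP3 (k := k)).smulRight (X.r13 u)) ∈ homSpace (Mprep k) X := by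
      refine ⟨?_, ?_, lmap_eq_of_subsingleton_dom _ _⟩
      · ext x
        simp only [LinearMap.comp_apply, LinearMap.smulRight_apply, map_smul]
        have h1 : prjP3 (k := k) ((Mprep k).r13 x) = prjP1 (k := k) x := rfl
        rw [h1]
      · ext x
        simp only [LinearMap.comp_apply, LinearMap.smulRight_apply, map_smul, hu12, smul_zero]
        rw [Subsingleton.elim ((Mprep k).r12 x) 0, map_zero]
    refine hom_ne_zero_of_mem hm ?_ h
    intro hz
    have h1 := congrArg (fun p => p.1 oneP1) hz
    simp only [LinearMap.smulRight_apply, prjP1_one, one_smul, Prod.fst_zero,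
      LinearMap.zero_apply] at h1
    exact hu h1
  · intro hinj
    refine hom_eq_zero_of_forall ?_
    rintro ⟨f1, f2, f3⟩ ⟨h13, h12, h23⟩
    have hf1 : f1 = 0 := by
      ext x
      have hx := congrArg (fun g => g x) h12
      simp only [LinearMap.comp_apply] at hx
      rw [Subsingleton.elim ((Mprep k).r12 x) 0, map_zero] at hx
      rw [LinearMap.zero_apply]
      exact hinj (show X.r12 (f1 x) = X.r12 0 by rw [map_zero, ← hx])
    have hf3 : f3 = 0 := by
      ext y
      have hx : f3 y = X.r13 (f1 y) := LinearMap.congr_fun h13 y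
      rw [hx, hf1]
      exact map_zero X.r13
    exact Prod.ext hf1 (Prod.ext (lmap_eq_of_subsingleton_dom _ _) hf3)

/-- B2: if `ext1(M', X) = 0` then `ρ12` is surjective. -/
lemma r12_surjective_of_ext1_Mprep (X : RepQ1 k) (h : ext1 (Mprep k) X = 0) :
    Surjective X.r12 := by
  have hs := phi_surjective_of_ext1_eq_zero h
  intro w
  obtain ⟨g, hg⟩ := hs (0, (prjP1 (k := k)).smulRight w, 0)
  have h2 := congrArg (fun p => p.2.1 oneP1) hg
  simp only [phi_apply, LinearMap.sub_apply, LinearMap.comp_apply,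
    LinearMap.smulRight_apply, prjP1_one, one_smul] at h2
  rw [Subsingleton.elim ((Mprep k).r12 oneP1) 0, map_zero, zero_sub] at h2
  exact ⟨-(g.1 oneP1), by rw [map_neg, h2]⟩

/-- B3: if `ρ12` is bijective then `hom(X, M) = 0` and `ext1(X, M) = 0`. -/
lemma hom_ext1_Mrep_eq_zero (X : RepQ1 k) (hi : Injective X.r12) (hs : Surjective X.r12) :
    hom X (Mrep k) = 0 ∧ ext1 X (Mrep k) = 0 := by
  obtain ⟨E, hE⟩ : ∃ E : X.V1 ≃ₗ[k] X.V2, ∀ x, E x = X.r12 x :=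
    ⟨LinearEquiv.ofBijective X.r12 ⟨hi, hs⟩, fun _ => rfl⟩
  constructor
  · refine hom_eq_zero_of_forall ?_
    rintro ⟨f1, f2, f3⟩ ⟨h13, h12, h23⟩
    have hf2 : f2 = 0 := by
      ext y
      obtain ⟨x, rfl⟩ := hs y
      have hx := congrArg (fun g => g x) h12
      simp only [LinearMap.comp_apply] at hx
      simp only [LinearMap.zero_apply]
      rw [hx]
      rfl
    exact Prod.ext (Subsingleton.elim _ _) (Prod.ext hf2 (Subsingleton.elim _ _))
  · refine ext1_eq_zero_of_phi_surjective ?_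
    rintro ⟨t1, t2, t3⟩
    refine ⟨(0, t2 ∘ₗ E.symm.toLinearMap, 0), ?_⟩
    rw [phi_apply]
    refine Prod.ext (Subsingleton.elim _ _) (Prod.ext ?_ (Subsingleton.elim _ _))
    simp only
    have hz : (Mrep k).r12 ∘ₗ (0 : X.V1 →ₗ[k] (Mrep k).V1) = 0 := LinearMap.comp_zero _
    rw [hz, sub_zero]
    ext x
    simp only [LinearMap.comp_apply]
    rw [show E.symm.toLinearMap (X.r12 x) = x from E.symm_apply_eq.mpr (hE x).symm]

end RepQ1
end MLemmas
section Pencil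

open Module Function LinearMap

namespace RepQ1

variable {k : Type u} [Field k]

lemma apply_eq_zero_of_comp_eq_zero {V W U : Type u} [AddCommGroup V] [Module k V]
    [AddCommGroup W] [Module k W] [AddCommGroup U] [Module k U]
    {f : W →ₗ[k] U} {g : V →ₗ[k] W} (h : f ∘ₗ g = 0) (x : V) : f (g x) = 0 := by
  have := congrArg (fun p => p x) h
  simpa using this

lemma exists_apply_ne_zero {V W : Type u} [AddCommGroup V] [Module k V]
    [AddCommGroup W] [Module k W] {f : V →ₗ[k] W} (h : f ≠ 0) : ∃ x, f x ≠ 0 := by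
  by_contra hc
  push_neg at hc
  exact h (LinearMap.ext fun x => by rw [hc x, LinearMap.zero_apply])

lemma pencil_two_vec {W : Type u} [AddCommGroup W] [Module k W]
    {p q : W} {lam mu lam' mu' : k} (hdet : lam * mu' - mu * lam' ≠ 0)
    (h1 : lam • p + mu • q = 0) (h2 : lam' • p + mu' • q = 0) : p = 0 ∧ q = 0 := by
  have zP : (lam * mu' - mu * lam') • p = 0 := by
    have h : (lam * mu' - mu * lam') • p = mu' • (lam • p + mu • q) - mu • (lam' • p + mu' • q) := by
      module
    rw [h, h1, h2, smul_zero, smul_zero, sub_self]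
  have zQ : (lam * mu' - mu * lam') • q = 0 := by
    have h : (lam * mu' - mu * lam') • q = lam • (lam' • p + mu' • q) - lam' • (lam • p + mu • q) := by
      module
    rw [h, h1, h2, smul_zero, smul_zero, sub_self]
  exact ⟨(smul_eq_zero.mp zP).resolve_left hdet, (smul_eq_zero.mp zQ).resolve_left hdet⟩

lemma pencil_two_to_cd {V W : Type u} [AddCommGroup V] [Module k V]
    [AddCommGroup W] [Module k W]
    {c d : V →ₗ[k] W} {g : V →ₗ[k] V} {g3 : W →ₗ[k] W} {lam mu lam' mu' : k}
    (hdet : lam * mu' - mu * lam' ≠ 0)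
    (h1 : g3 ∘ₗ (lam • c + mu • d) = (lam • c + mu • d) ∘ₗ g)
    (h2 : g3 ∘ₗ (lam' • c + mu' • d) = (lam' • c + mu' • d) ∘ₗ g) :
    g3 ∘ₗ c = c ∘ₗ g ∧ g3 ∘ₗ d = d ∘ₗ g := by
  have h1' : lam • (g3 ∘ₗ c) + mu • (g3 ∘ₗ d) = lam • (c ∘ₗ g) + mu • (d ∘ₗ g) := by
    have e1 : g3 ∘ₗ (lam • c + mu • d) = lam • (g3 ∘ₗ c) + mu • (g3 ∘ₗ d) := by
      ext x; simp
    have e2 : (lam • c + mu • d) ∘ₗ g = lam • (c ∘ₗ g) + mu • (d ∘ₗ g) := by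
      ext x; simp
    rw [← e1, ← e2, h1]
  have h2' : lam' • (g3 ∘ₗ c) + mu' • (g3 ∘ₗ d) = lam' • (c ∘ₗ g) + mu' • (d ∘ₗ g) := by
    have e1 : g3 ∘ₗ (lam' • c + mu' • d) = lam' • (g3 ∘ₗ c) + mu' • (g3 ∘ₗ d) := by
      ext x; simp
    have e2 : (lam' • c + mu' • d) ∘ₗ g = lam' • (c ∘ₗ g) + mu' • (d ∘ₗ g) := by
      ext x; simp
    rw [← e1, ← e2, h2]
  have z1 : lam • (g3 ∘ₗ c - c ∘ₗ g) + mu • (g3 ∘ₗ d - d ∘ₗ g) = 0 := by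
    have h : lam • (g3 ∘ₗ c - c ∘ₗ g) + mu • (g3 ∘ₗ d - d ∘ₗ g)
        = (lam • (g3 ∘ₗ c) + mu • (g3 ∘ₗ d)) - (lam • (c ∘ₗ g) + mu • (d ∘ₗ g)) := by
      module
    rw [h, h1', sub_self]
  have z2 : lam' • (g3 ∘ₗ c - c ∘ₗ g) + mu' • (g3 ∘ₗ d - d ∘ₗ g) = 0 := by
    have h : lam' • (g3 ∘ₗ c - c ∘ₗ g) + mu' • (g3 ∘ₗ d - d ∘ₗ g)
        = (lam' • (g3 ∘ₗ c) + mu' • (g3 ∘ₗ d)) - (lam' • (c ∘ₗ g) + mu' • (d ∘ₗ g)) := by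
      module
    rw [h, h2', sub_self]
  obtain ⟨hp, hq⟩ := pencil_two_vec hdet z1 z2
  rw [sub_eq_zero] at hp hq
  exact ⟨hp, hq⟩

/-- Step 2: in a brick `Y` with injective `r12`, `r23` and `dim Y3 = dim Y1 + 1`,
every nonzero combination `λ r13 + μ (r23 ∘ r12)` is injective. -/
lemma pencil_inj (Y : RepQ1 k) (hbrick : hom Y Y = 1)
    (h12i : Injective Y.r12) (h23i : Injective Y.r23)
    (hdim : finrank k Y.V3 = finrank k Y.V1 + 1)
    (Hmed : ∀ g1 : Y.V1 →ₗ[k] Y.V1, ∀ g3 : Y.V3 →ₗ[k] Y.V3,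
      g3 ∘ₗ (Y.r23 ∘ₗ Y.r12) = (Y.r23 ∘ₗ Y.r12) ∘ₗ g1 →
      ∃ g2 : Y.V2 →ₗ[k] Y.V2, g2 ∘ₗ Y.r12 = Y.r12 ∘ₗ g1 ∧ g3 ∘ₗ Y.r23 = Y.r23 ∘ₗ g2)
    (lam mu : k) (hlm : ¬(lam = 0 ∧ mu = 0)) :
    Injective (lam • Y.r13 + mu • (Y.r23 ∘ₗ Y.r12)) := by
  rw [← LinearMap.ker_eq_bot]
  by_contra hk
  obtain ⟨u, hmem, hu⟩ := Submodule.exists_mem_ne_zero_of_ne_bot hk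
  have heu : (lam • Y.r13 + mu • (Y.r23 ∘ₗ Y.r12)) u = 0 := hmem
  obtain ⟨lam', mu', hdet⟩ : ∃ lam' mu' : k, lam * mu' - mu * lam' ≠ 0 := by
    rcases eq_or_ne lam 0 with h | h
    · refine ⟨1, 0, ?_⟩
      have hmu : mu ≠ 0 := fun hm => hlm ⟨h, hm⟩
      simp only [mul_zero, mul_one, zero_sub, ne_eq, neg_eq_zero]
      exact hmu
    · refine ⟨0, 1, ?_⟩
      simpa using h
  -- e' u ≠ 0
  have he'u : (lam' • Y.r13 + mu' • (Y.r23 ∘ₗ Y.r12)) u ≠ 0 := by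
    intro h0
    have h1 : lam • (Y.r13 u) + mu • ((Y.r23 ∘ₗ Y.r12) u) = 0 := by
      rw [← heu]; simp
    have h2 : lam' • (Y.r13 u) + mu' • ((Y.r23 ∘ₗ Y.r12) u) = 0 := by
      rw [← h0]; simp
    obtain ⟨hp, hq⟩ := pencil_two_vec hdet h1 h2
    have h12u : Y.r12 u = 0 := by
      refine h23i ?_
      rw [map_zero]
      exact hq
    exact hu (h12i (by rw [h12u, map_zero]))
  -- e is not surjective
  have hns : Surjective (lam • Y.r13 + mu • (Y.r23 ∘ₗ Y.r12)) → False := by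
    intro hsur
    have h1 := LinearMap.finrank_range_le (lam • Y.r13 + mu • (Y.r23 ∘ₗ Y.r12))
    rw [LinearMap.range_eq_top.mpr hsur, finrank_top] at h1
    omega
  obtain ⟨χ, hχne, hχe⟩ := exists_ann_of_not_surj hns
  have hχe' : ∀ x, χ ((lam • Y.r13 + mu • (Y.r23 ∘ₗ Y.r12)) x) = 0 :=
    apply_eq_zero_of_comp_eq_zero hχe
  have r1 : (χ.smulRight ((lam' • Y.r13 + mu' • (Y.r23 ∘ₗ Y.r12)) u))
      ∘ₗ (lam • Y.r13 + mu • (Y.r23 ∘ₗ Y.r12))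
      = (lam • Y.r13 + mu • (Y.r23 ∘ₗ Y.r12))
      ∘ₗ ((χ ∘ₗ (lam' • Y.r13 + mu' • (Y.r23 ∘ₗ Y.r12))).smulRight u) := by
    ext x
    simp only [LinearMap.comp_apply, LinearMap.smulRight_apply, hχe' x, zero_smul, map_smul]
    rw [heu, smul_zero]
  have r2 : (χ.smulRight ((lam' • Y.r13 + mu' • (Y.r23 ∘ₗ Y.r12)) u))
      ∘ₗ (lam' • Y.r13 + mu' • (Y.r23 ∘ₗ Y.r12))
      = (lam' • Y.r13 + mu' • (Y.r23 ∘ₗ Y.r12))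
      ∘ₗ ((χ ∘ₗ (lam' • Y.r13 + mu' • (Y.r23 ∘ₗ Y.r12))).smulRight u) := by
    ext x
    simp only [LinearMap.comp_apply, LinearMap.smulRight_apply, map_smul]
  obtain ⟨hgc, hgd⟩ := pencil_two_to_cd hdet r1 r2
  obtain ⟨g2, hg2a, hg2b⟩ := Hmed _ _ hgd
  have hmemY : (((χ ∘ₗ (lam' • Y.r13 + mu' • (Y.r23 ∘ₗ Y.r12))).smulRight u), g2,
      (χ.smulRight ((lam' • Y.r13 + mu' • (Y.r23 ∘ₗ Y.r12)) u))) ∈ homSpace Y Y :=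
    ⟨hgc, hg2a, hg2b⟩
  have hidne : idT Y ≠ 0 := by
    intro h0
    have h1 := congrArg (fun p => p.1 u) h0
    simp only [idT, LinearMap.id_apply, Prod.fst_zero, LinearMap.zero_apply] at h1
    exact hu h1
  obtain ⟨cc, hcc3⟩ := brick_scalar hbrick hidne hmemY
  have hg3eq : (χ.smulRight ((lam' • Y.r13 + mu' • (Y.r23 ∘ₗ Y.r12)) u))
      = cc • (LinearMap.id : Y.V3 →ₗ[k] Y.V3) := congrArg (fun p => p.2.2) hcc3
  -- a nonzero vector in ker χ
  obtain ⟨y1, hy1, hy1k⟩ : ∃ y1 : Y.V3, y1 ≠ 0 ∧ χ y1 = 0 := by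
    have hnt : Nontrivial Y.V1 := ⟨u, 0, hu⟩
    have hpos : 0 < finrank k Y.V1 := Module.finrank_pos
    have hker1 := finrank_ker_dual hχne
    have hne : LinearMap.ker χ ≠ ⊥ := by
      intro hb
      rw [hb, finrank_bot] at hker1
      omega
    obtain ⟨y1, hy1m, hy1⟩ := Submodule.exists_mem_ne_zero_of_ne_bot hne
    exact ⟨y1, hy1, hy1m⟩
  have hcc0 : cc = 0 := by
    have h1 := congrArg (fun f => f y1) hg3eq
    simp only [LinearMap.smulRight_apply, hy1k, zero_smul, LinearMap.smul_apply,
      LinearMap.id_apply] at h1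
    rcases smul_eq_zero.mp h1.symm with h | h
    · exact h
    · exact absurd h hy1
  obtain ⟨y2, hy2⟩ := exists_apply_ne_zero hχne
  have h2 := congrArg (fun f => f y2) hg3eq
  simp only [LinearMap.smulRight_apply, hcc0, zero_smul, LinearMap.smul_apply,
    LinearMap.id_apply] at h2
  rcases smul_eq_zero.mp h2 with h | h
  · exact hy2 h
  · exact he'u h

end RepQ1
end Pencil
section XSide

open Module Function LinearMap

namespace RepQ1

variable {k : Type u} [Field k]

lemma idT_ne_zero_of_V1 (X : RepQ1 k) (h : Nontrivial X.V1) : idT X ≠ 0 := by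
  obtain ⟨x, hx⟩ := exists_ne (0 : X.V1)
  intro h0
  have h1 := congrArg (fun p => p.1 x) h0
  simp only [idT, LinearMap.id_apply, Prod.fst_zero, LinearMap.zero_apply] at h1
  exact hx h1

lemma idT_ne_zero_of_V2 (X : RepQ1 k) (h : Nontrivial X.V2) : idT X ≠ 0 := by
  obtain ⟨x, hx⟩ := exists_ne (0 : X.V2)
  intro h0
  have h1 := congrArg (fun p => p.2.1 x) h0
  simp only [idT, LinearMap.id_apply, Prod.snd_zero, Prod.fst_zero, LinearMap.zero_apply] at h1
  exact hx h1

lemma idT_ne_zero_of_V3 (X : RepQ1 k) (h : Nontrivial X.V3) : idT X ≠ 0 := by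
  obtain ⟨x, hx⟩ := exists_ne (0 : X.V3)
  intro h0
  have h1 := congrArg (fun p => p.2.2 x) h0
  simp only [idT, LinearMap.id_apply, Prod.snd_zero, LinearMap.zero_apply] at h1
  exact hx h1

lemma scalar_zero_of_zero_eq {V : Type u} [AddCommGroup V] [Module k V] (h : Nontrivial V)
    {cc : k} (hz : (0 : V →ₗ[k] V) = cc • LinearMap.id) : cc = 0 := by
  obtain ⟨x, hx⟩ := exists_ne (0 : V)
  have h1 := congrArg (fun f => f x) hz
  simp only [LinearMap.zero_apply, LinearMap.smul_apply, LinearMap.id_apply] at h1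
  rcases smul_eq_zero.mp h1.symm with h' | h'
  · exact h'
  · exact absurd h' hx

lemma smulRight_eq_zero_left {V W : Type u} [AddCommGroup V] [Module k V]
    [AddCommGroup W] [Module k W] {ξ : V →ₗ[k] k} {w : W}
    (h : ξ.smulRight w = 0) (hw : w ≠ 0) : ξ = 0 := by
  ext x
  have h1 := congrArg (fun f => f x) h
  simp only [LinearMap.smulRight_apply, LinearMap.zero_apply] at h1
  rcases smul_eq_zero.mp h1 with h' | h'
  · simpa using h'
  · exact absurd h' hw

lemma smulRight_eq_zero_right {V W : Type u} [AddCommGroup V] [Module k V]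
    [AddCommGroup W] [Module k W] {ξ : V →ₗ[k] k} {w : W}
    (h : ξ.smulRight w = 0) (hξ : ξ ≠ 0) : w = 0 := by
  obtain ⟨x, hx⟩ := exists_apply_ne_zero hξ
  have h1 := congrArg (fun f => f x) h
  simp only [LinearMap.smulRight_apply, LinearMap.zero_apply] at h1
  rcases smul_eq_zero.mp h1 with h' | h'
  · exact absurd h' hx
  · exact h'

/-- In case 1, the first vertex space is nontrivial. -/
lemma nontrivial_V1_case1 (X : RepQ1 k) (hbrick : hom X X = 1)
    (v : X.V2) (hv : v ≠ 0) (hv23 : X.r23 v = 0) (h3 : Nontrivial X.V3) :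
    Nontrivial X.V1 := by
  by_contra hns
  rw [not_nontrivial_iff_subsingleton] at hns
  obtain ⟨ξ, hξ⟩ := exists_dual_one (k := k) hv
  have hmem : ((0 : X.V1 →ₗ[k] X.V1), ξ.smulRight v, (0 : X.V3 →ₗ[k] X.V3))
      ∈ homSpace X X := by
    refine ⟨by simp, ?_, ?_⟩
    · ext x
      rw [Subsingleton.elim x (0 : X.V1)]
      simp
    · ext x
      simp [hv23]
  obtain ⟨cc, hcc⟩ := brick_scalar hbrick (idT_ne_zero_of_V3 X h3) hmem
  have hg3 := congrArg (fun p => p.2.2) hcc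
  simp only [idT, Prod.smul_snd, Prod.smul_fst] at hg3
  have hcc0 : cc = 0 := scalar_zero_of_zero_eq h3 hg3
  have hg2 := congrArg (fun p => p.2.1) hcc
  simp only [idT, Prod.smul_snd, Prod.smul_fst, hcc0, zero_smul] at hg2
  have := smulRight_eq_zero_right hg2 (by
    intro h0
    have := congrArg (fun f => f v) h0
    simp only [LinearMap.zero_apply] at this
    rw [hξ] at this
    exact one_ne_zero this)
  exact hv this

/-- In case 1, `r12` is surjective. -/
lemma r12_surj_case1 (X : RepQ1 k) (hbrick : hom X X = 1)
    (v : X.V2) (hv : v ≠ 0) (hv23 : X.r23 v = 0) (h1 : Nontrivial X.V1) :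
    Surjective X.r12 := by
  by_contra hns
  obtain ⟨ξ, hξne, hξ12⟩ := exists_ann_of_not_surj (fun hs => hns hs)
  have hmem : ((0 : X.V1 →ₗ[k] X.V1), ξ.smulRight v, (0 : X.V3 →ₗ[k] X.V3))
      ∈ homSpace X X := by
    refine ⟨by simp, ?_, ?_⟩
    · ext x
      simp [apply_eq_zero_of_comp_eq_zero hξ12 x]
    · ext x
      simp [hv23]
  obtain ⟨cc, hcc⟩ := brick_scalar hbrick (idT_ne_zero_of_V1 X h1) hmem
  have hg1 := congrArg (fun p => p.1) hcc
  simp only [idT, Prod.smul_fst] at hg1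
  have hcc0 : cc = 0 := scalar_zero_of_zero_eq h1 hg1
  have hg2 := congrArg (fun p => p.2.1) hcc
  simp only [idT, Prod.smul_snd, Prod.smul_fst, hcc0, zero_smul] at hg2
  exact hξne (smulRight_eq_zero_left hg2 hv)

/-- In case 1, `r23 ∘ r12` is surjective. -/
lemma comp_surj_case1 (X : RepQ1 k) (hrig : Surjective (phi X X))
    (v : X.V2) (hv : v ≠ 0) (hv23 : X.r23 v = 0) (h12s : Surjective X.r12) :
    Surjective (X.r23 ∘ₗ X.r12) := by
  by_contra hns
  obtain ⟨χ, hχne, hχD⟩ := exists_ann_of_not_surj (fun hs => hns hs)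
  obtain ⟨y, hy⟩ := exists_apply_ne_zero hχne
  set y0 : X.V3 := (χ y)⁻¹ • y with hy0
  have hχy0 : χ y0 = 1 := by
    rw [hy0, map_smul, smul_eq_mul, inv_mul_cancel₀ hy]
  obtain ⟨ζ, hζ⟩ := exists_dual_one (k := k) hv
  obtain ⟨u0, hu0⟩ := h12s v
  obtain ⟨g, hg⟩ := hrig (0, 0, ζ.smulRight y0)
  have e2 := congrArg (fun p => p.2.1) hg
  have e3 := congrArg (fun p => p.2.2) hg
  simp only [phi_apply] at e2 e3
  have e3v := congrArg (fun f => f v) e3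
  simp only [LinearMap.sub_apply, LinearMap.comp_apply, LinearMap.smulRight_apply, hζ,
    one_smul, hv23, map_zero, zero_sub] at e3v
  -- e3v : -X.r23 (g.2.1 v) = y0
  have e2u := congrArg (fun f => f u0) e2
  simp only [LinearMap.sub_apply, LinearMap.comp_apply, Prod.snd_zero, Prod.fst_zero,
    LinearMap.zero_apply, sub_eq_zero, hu0] at e2u
  -- e2u : g.2.1 v = X.r12 (g.1 u0)
  have : χ ((X.r23 ∘ₗ X.r12) (g.1 u0)) = -1 := by
    have h0 : X.r23 (g.2.1 v) = -y0 := by rw [← e3v, neg_neg]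
    rw [e2u] at h0
    have : (X.r23 ∘ₗ X.r12) (g.1 u0) = -y0 := by
      rw [LinearMap.comp_apply, h0]
    rw [this, map_neg, hχy0]
  rw [apply_eq_zero_of_comp_eq_zero hχD (g.1 u0)] at this
  exact one_ne_zero (neg_eq_zero.mp this.symm)

/-- Shared step 3e: combinations with nonzero `r13`-coefficient are surjective. -/
lemma combo_surj (X : RepQ1 k) (hrig : Surjective (phi X X))
    (hDs : Surjective (X.r23 ∘ₗ X.r12))
    (w : X.V1) (hw : w ≠ 0) (hww : (X.r23 ∘ₗ X.r12) w = 0)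
    (lam mu : k) (hlam : lam ≠ 0) :
    Surjective (lam • X.r13 + mu • (X.r23 ∘ₗ X.r12)) := by
  by_contra hns
  obtain ⟨χ, hχne, hχA⟩ := exists_ann_of_not_surj (fun hs => hns hs)
  obtain ⟨y, hy⟩ := exists_apply_ne_zero hχne
  set y0 : X.V3 := (χ y)⁻¹ • y with hy0
  have hχy0 : χ y0 = 1 := by
    rw [hy0, map_smul, smul_eq_mul, inv_mul_cancel₀ hy]
  have hAinj : Injective (lam • X.r13 + mu • (X.r23 ∘ₗ X.r12)) := by
    rw [← LinearMap.ker_eq_bot]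
    by_contra hk
    obtain ⟨u1, hmem, hu1⟩ := Submodule.exists_mem_ne_zero_of_ne_bot hk
    have hAu1 : lam • X.r13 u1 + mu • (X.r23 (X.r12 u1)) = 0 := by
      have : (lam • X.r13 + mu • (X.r23 ∘ₗ X.r12)) u1 = 0 := hmem
      simpa using this
    obtain ⟨π, hπ⟩ := exists_dual_one (k := k) hu1
    obtain ⟨g, hg⟩ := hrig (π.smulRight (lam⁻¹ • y0), 0, 0)
    have e1 := congrArg (fun p => p.1) hg
    have e2 := congrArg (fun p => p.2.1) hg
    have e3 := congrArg (fun p => p.2.2) hg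
    simp only [phi_apply] at e1 e2 e3
    have e1u := congrArg (fun f => f u1) e1
    simp only [LinearMap.sub_apply, LinearMap.comp_apply, LinearMap.smulRight_apply, hπ,
      one_smul] at e1u
    -- e1u : g.2.2 (X.r13 u1) - X.r13 (g.1 u1) = lam⁻¹ • y0
    have e2u := congrArg (fun f => f u1) e2
    simp only [LinearMap.sub_apply, LinearMap.comp_apply, Prod.snd_zero, Prod.fst_zero,
      LinearMap.zero_apply, sub_eq_zero] at e2u
    -- e2u : g.2.1 (X.r12 u1) = X.r12 (g.1 u1)
    have e3u := congrArg (fun f => f (X.r12 u1)) e3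
    simp only [LinearMap.sub_apply, LinearMap.comp_apply, Prod.snd_zero,
      LinearMap.zero_apply, sub_eq_zero] at e3u
    -- e3u : g.2.2 (X.r23 (X.r12 u1)) = X.r23 (g.2.1 (X.r12 u1))
    have hkey : g.2.2 (lam • X.r13 u1 + mu • (X.r23 (X.r12 u1)))
        = y0 + (lam • X.r13 (g.1 u1) + mu • (X.r23 (X.r12 (g.1 u1)))) := by
      rw [map_add, map_smul, map_smul]
      have hg13 : g.2.2 (X.r13 u1) = lam⁻¹ • y0 + X.r13 (g.1 u1) := by
        rw [← e1u]; abel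
      have hg23 : g.2.2 (X.r23 (X.r12 u1)) = X.r23 (X.r12 (g.1 u1)) := by
        rw [e3u, e2u]
      rw [hg13, hg23, smul_add, smul_smul, mul_inv_cancel₀ hlam, one_smul]
      abel
    rw [hAu1, map_zero] at hkey
    have hχkey := congrArg χ hkey
    rw [map_zero, map_add, hχy0] at hχkey
    have hA2 : χ (lam • X.r13 (g.1 u1) + mu • X.r23 (X.r12 (g.1 u1))) = 0 := by
      have := apply_eq_zero_of_comp_eq_zero hχA (g.1 u1)
      simpa using this
    rw [hA2, add_zero] at hχkey
    exact zero_ne_one hχkey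
  -- dimension count
  have hrange : finrank k (LinearMap.range (lam • X.r13 + mu • (X.r23 ∘ₗ X.r12)))
      = finrank k X.V1 := LinearMap.finrank_range_of_inj hAinj
  have hle : LinearMap.range (lam • X.r13 + mu • (X.r23 ∘ₗ X.r12)) ≤ LinearMap.ker χ := by
    rintro z ⟨x, rfl⟩
    exact apply_eq_zero_of_comp_eq_zero hχA x
  have h1 : finrank k X.V1 ≤ finrank k (LinearMap.ker χ) := by
    rw [← hrange]
    exact Submodule.finrank_mono hle
  have h2 := finrank_ker_dual hχne
  have h3 := LinearMap.finrank_range_add_finrank_ker (X.r23 ∘ₗ X.r12)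
  rw [LinearMap.range_eq_top.mpr hDs, finrank_top] at h3
  have h4 : 0 < finrank k (LinearMap.ker (X.r23 ∘ₗ X.r12)) := by
    have hnt : Nontrivial (LinearMap.ker (X.r23 ∘ₗ X.r12)) :=
      ⟨⟨w, LinearMap.mem_ker.mpr hww⟩, 0, by simp [Subtype.ext_iff, hw]⟩
    exact Module.finrank_pos
  omega

end RepQ1
end XSide
section XSide2

open Module Function LinearMap

namespace RepQ1

variable {k : Type u} [Field k]

/-- In case 2, `r13 u ≠ 0` for a kernel vector `u` of `r12`. -/
lemma r13u_ne_zero_case2 (X : RepQ1 k) (hbrick : hom X X = 1)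
    (u : X.V1) (hu : u ≠ 0) (hu12 : X.r12 u = 0) (h3 : Nontrivial X.V3) :
    X.r13 u ≠ 0 := by
  intro h13u
  obtain ⟨ξ, hξ⟩ := exists_dual_one (k := k) hu
  have hmem : (ξ.smulRight u, (0 : X.V2 →ₗ[k] X.V2), (0 : X.V3 →ₗ[k] X.V3))
      ∈ homSpace X X := by
    refine ⟨?_, ?_, by simp⟩
    · ext x
      simp [h13u]
    · ext x
      simp [hu12]
  obtain ⟨cc, hcc⟩ := brick_scalar hbrick (idT_ne_zero_of_V3 X h3) hmem
  have hg3 := congrArg (fun p => p.2.2) hcc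
  simp only [idT, Prod.smul_snd] at hg3
  have hcc0 : cc = 0 := scalar_zero_of_zero_eq h3 hg3
  have hg1 := congrArg (fun p => p.1) hcc
  simp only [idT, Prod.smul_fst, hcc0, zero_smul] at hg1
  exact hu (smulRight_eq_zero_right hg1 (by
    intro h0
    have := congrArg (fun f => f u) h0
    simp only [LinearMap.zero_apply] at this
    rw [hξ] at this
    exact one_ne_zero this))

/-- In case 2, `r23` is surjective (when `V2` is nontrivial). -/
lemma r23_surj_case2 (X : RepQ1 k) (hbrick : hom X X = 1)
    (u : X.V1) (hu12 : X.r12 u = 0) (h13u : X.r13 u ≠ 0) (h2 : Nontrivial X.V2) :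
    Surjective X.r23 := by
  by_contra hns
  obtain ⟨ξ, hξne, hξ23⟩ := exists_ann_of_not_surj (fun hs => hns hs)
  have hmem : ((ξ ∘ₗ X.r13).smulRight u, (0 : X.V2 →ₗ[k] X.V2),
      ξ.smulRight (X.r13 u)) ∈ homSpace X X := by
    refine ⟨?_, ?_, ?_⟩
    · ext x
      simp
    · ext x
      simp [hu12]
    · ext x
      simp [apply_eq_zero_of_comp_eq_zero hξ23 x]
  obtain ⟨cc, hcc⟩ := brick_scalar hbrick (idT_ne_zero_of_V2 X h2) hmem
  have hg2 := congrArg (fun p => p.2.1) hcc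
  simp only [idT, Prod.smul_snd, Prod.smul_fst] at hg2
  have hcc0 : cc = 0 := scalar_zero_of_zero_eq h2 hg2
  have hg3 := congrArg (fun p => p.2.2) hcc
  simp only [idT, Prod.smul_snd, hcc0, zero_smul] at hg3
  exact h13u (smulRight_eq_zero_right hg3 hξne)

/-- In case 2, `r23 ∘ r12` is surjective (when `V2` is nontrivial). -/
lemma comp_surj_case2 (X : RepQ1 k) (hrig : Surjective (phi X X))
    (u : X.V1) (hu : u ≠ 0) (hu12 : X.r12 u = 0) (h23s : Surjective X.r23) :
    Surjective (X.r23 ∘ₗ X.r12) := by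
  by_contra hns
  obtain ⟨χ, hχne, hχD⟩ := exists_ann_of_not_surj (fun hs => hns hs)
  have hωne : χ ∘ₗ X.r23 ≠ 0 := by
    intro h0
    refine hχne (LinearMap.ext fun y => ?_)
    obtain ⟨x, rfl⟩ := h23s y
    have := apply_eq_zero_of_comp_eq_zero h0 x
    simpa using this
  obtain ⟨w1, hw1⟩ := exists_apply_ne_zero hωne
  set w0 : X.V2 := ((χ ∘ₗ X.r23) w1)⁻¹ • w1 with hw0
  have hωw0 : χ (X.r23 w0) = 1 := by
    rw [hw0, map_smul, map_smul, smul_eq_mul]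
    exact inv_mul_cancel₀ hw1
  obtain ⟨π, hπ⟩ := exists_dual_one (k := k) hu
  obtain ⟨g, hg⟩ := hrig (0, π.smulRight w0, 0)
  have e2 := congrArg (fun p => p.2.1) hg
  have e3 := congrArg (fun p => p.2.2) hg
  simp only [phi_apply] at e2 e3
  have e2u := congrArg (fun f => f u) e2
  simp only [LinearMap.sub_apply, LinearMap.comp_apply, LinearMap.smulRight_apply, hπ,
    one_smul, hu12, map_zero, zero_sub] at e2u
  -- e2u : -X.r12 (g.1 u) = w0  (since g.2.1 (X.r12 u) = g.2.1 0 = 0)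
  have e3u := congrArg (fun f => f (X.r12 (g.1 u))) e3
  simp only [LinearMap.sub_apply, LinearMap.comp_apply, Prod.snd_zero,
    LinearMap.zero_apply, sub_eq_zero] at e3u
  -- e3u : g.2.2 (X.r23 (X.r12 (g.1 u))) = X.r23 (g.2.1 (X.r12 (g.1 u)))
  have hD0 : χ (X.r23 (X.r12 (g.1 u))) = 0 := by
    have := apply_eq_zero_of_comp_eq_zero hχD (g.1 u)
    simpa using this
  have : X.r12 (g.1 u) = -w0 := by
    rw [← e2u, neg_neg]
  rw [this] at hD0
  rw [map_neg, map_neg, hωw0] at hD0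
  exact one_ne_zero (neg_eq_zero.mp hD0)

/-- In case 2 with `V2` trivial, `r13` is surjective. -/
lemma r13_surj_sub2 (X : RepQ1 k) (hbrick : hom X X = 1)
    (h1 : Nontrivial X.V1) (h3 : Nontrivial X.V3) (h2 : Subsingleton X.V2) :
    Surjective X.r13 := by
  by_contra hns
  obtain ⟨χ, hχne, hχ13⟩ := exists_ann_of_not_surj (fun hs => hns hs)
  obtain ⟨y3, hy3⟩ := exists_ne (0 : X.V3)
  have hmem : ((0 : X.V1 →ₗ[k] X.V1), (0 : X.V2 →ₗ[k] X.V2),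
      χ.smulRight y3) ∈ homSpace X X := by
    refine ⟨?_, by simp, ?_⟩
    · ext x
      simp [apply_eq_zero_of_comp_eq_zero hχ13 x]
    · ext x
      rw [Subsingleton.elim x (0 : X.V2)]
      simp
  obtain ⟨cc, hcc⟩ := brick_scalar hbrick (idT_ne_zero_of_V1 X h1) hmem
  have hg1 := congrArg (fun p => p.1) hcc
  simp only [idT, Prod.smul_fst] at hg1
  have hcc0 : cc = 0 := scalar_zero_of_zero_eq h1 hg1
  have hg3 := congrArg (fun p => p.2.2) hcc
  simp only [idT, Prod.smul_snd, hcc0, zero_smul] at hg3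
  exact hy3 (smulRight_eq_zero_right hg3 hχne)

end RepQ1
end XSide2
section FinalStep

open Module Function LinearMap

namespace RepQ1

variable {k : Type u} [Field k]

lemma final_step [IsAlgClosed k] (X Y : RepQ1 k)
    {f1 : X.V1 →ₗ[k] Y.V1} {f3 : X.V3 →ₗ[k] Y.V3}
    (c13 : f3 ∘ₗ X.r13 = Y.r13 ∘ₗ f1)
    (cD : f3 ∘ₗ (X.r23 ∘ₗ X.r12) = (Y.r23 ∘ₗ Y.r12) ∘ₗ f1)
    (hs13 : Surjective X.r13) (hsD : Surjective (X.r23 ∘ₗ X.r12))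
    (Hpi : ∀ lam mu : k, ¬(lam = 0 ∧ mu = 0) →
      Injective (lam • Y.r13 + mu • (Y.r23 ∘ₗ Y.r12)))
    (hf3 : f3 ≠ 0) : False := by
  have hmap1 : Submodule.map Y.r13 (LinearMap.range f1) = LinearMap.range f3 := by
    rw [← LinearMap.range_comp, ← c13]
    exact LinearMap.range_comp_of_range_eq_top f3 (LinearMap.range_eq_top.mpr hs13)
  have hmapD : Submodule.map (Y.r23 ∘ₗ Y.r12) (LinearMap.range f1)
      = LinearMap.range f3 := by
    rw [← LinearMap.range_comp, ← cD]
    exact LinearMap.range_comp_of_range_eq_top f3 (LinearMap.range_eq_top.mpr hsD)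
  have hdinj : Injective (Y.r23 ∘ₗ Y.r12) := by
    have h := Hpi 0 1 (by simp)
    have heq : (0 : k) • Y.r13 + (1 : k) • (Y.r23 ∘ₗ Y.r12) = Y.r23 ∘ₗ Y.r12 := by
      simp
    rwa [heq] at h
  have hF1ne : LinearMap.range f1 ≠ ⊥ := by
    intro hb
    rw [hb] at hmap1
    rw [Submodule.map_bot] at hmap1
    exact hf3 (LinearMap.range_eq_bot.mp hmap1.symm)
  have hcmaps : ∀ x ∈ LinearMap.range f1, Y.r13 x ∈ LinearMap.range f3 := by
    intro x hx
    rw [← hmap1]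
    exact Submodule.mem_map_of_mem hx
  have hdmaps : ∀ x ∈ LinearMap.range f1, (Y.r23 ∘ₗ Y.r12) x ∈ LinearMap.range f3 := by
    intro x hx
    rw [← hmapD]
    exact Submodule.mem_map_of_mem hx
  set cr := Y.r13.restrict hcmaps with hcr
  set dr := (Y.r23 ∘ₗ Y.r12).restrict hdmaps with hdr
  have hdrbij : Bijective dr := by
    constructor
    · intro a b hab
      have h1 : (Y.r23 ∘ₗ Y.r12) (a : Y.V1) = (Y.r23 ∘ₗ Y.r12) (b : Y.V1) := by
        have := congrArg (Subtype.val) hab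
        simpa [hdr, LinearMap.restrict_apply] using this
      exact Subtype.ext (hdinj h1)
    · rintro ⟨y, hy⟩
      rw [← hmapD] at hy
      obtain ⟨x, hx, hxy⟩ := Submodule.mem_map.mp hy
      exact ⟨⟨x, hx⟩, Subtype.ext (by simpa [hdr, LinearMap.restrict_apply] using hxy)⟩
  obtain ⟨E, hEap⟩ : ∃ E : (LinearMap.range f1) ≃ₗ[k] (LinearMap.range f3),
      ∀ x, E x = dr x := ⟨LinearEquiv.ofBijective dr hdrbij, fun _ => rfl⟩
  have hnt : Nontrivial (LinearMap.range f1) := Submodule.nontrivial_iff_ne_bot.mpr hF1ne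
  set θ : Module.End k (LinearMap.range f1) := E.symm.toLinearMap ∘ₗ cr with hθ
  obtain ⟨μ0, hμ0⟩ := Module.End.exists_eigenvalue θ
  obtain ⟨wv, hwv⟩ := hμ0.exists_hasEigenvector
  have h4 : θ wv = μ0 • wv := hwv.apply_eq_smul
  have h6 : cr wv = μ0 • (dr wv) := by
    have h5 : E (θ wv) = cr wv := by
      rw [hθ]
      simp only [LinearMap.comp_apply, LinearEquiv.coe_coe]
      exact E.apply_symm_apply _
    rw [h4, map_smul, hEap] at h5
    exact h5.symm
  have h7 : Y.r13 (wv : Y.V1) = μ0 • ((Y.r23 ∘ₗ Y.r12) (wv : Y.V1)) := by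
    have := congrArg (Subtype.val) h6
    simpa [hcr, hdr, LinearMap.restrict_apply] using this
  have h8 : ((1 : k) • Y.r13 + (-μ0) • (Y.r23 ∘ₗ Y.r12)) (wv : Y.V1) = 0 := by
    have hexp : ((1 : k) • Y.r13 + (-μ0) • (Y.r23 ∘ₗ Y.r12)) (wv : Y.V1)
        = Y.r13 (wv : Y.V1) + (-μ0) • ((Y.r23 ∘ₗ Y.r12) (wv : Y.V1)) := by
      simp
    rw [hexp, h7, neg_smul]
    first
    | exact add_neg_cancel _
    | exact add_right_neg _
  have h9 := Hpi 1 (-μ0) (by simp)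
  have h10 : (wv : Y.V1) = 0 := by
    refine h9 ?_
    rw [map_zero, h8]
  exact hwv.2 (by
    have : wv = 0 := Subtype.ext (by simpa using h10)
    exact this)

end RepQ1
end FinalStep
section Cores

open Module Function LinearMap

namespace RepQ1

variable {k : Type u} [Field k]

lemma nat_sq1 (a b : ℕ) (h : 1 + (a*b + a*b + b*b) = 0 + (a*a + b*b + b*b))
    (hle : a ≤ b) : b = a + 1 := by
  obtain ⟨t, rfl⟩ := Nat.exists_eq_add_of_le hle
  have ht : t * t = 1 := by nlinarith
  have ht1 : t = 1 := Nat.dvd_one.mp ⟨t, ht.symm⟩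
  omega

lemma nat_sq2 (a b : ℕ) (h : 1 + (a*b + a*a + a*b) = 0 + (a*a + a*a + b*b))
    (hle : a ≤ b) : b = a + 1 := by
  obtain ⟨t, rfl⟩ := Nat.exists_eq_add_of_le hle
  have ht : t * t = 1 := by nlinarith
  have ht1 : t = 1 := Nat.dvd_one.mp ⟨t, ht.symm⟩
  omega

lemma core1 [IsAlgClosed k] (X Y : RepQ1 k) (hX : X.IsExceptional) (hY : Y.IsExceptional)
    (v : X.V2) (hv : v ≠ 0) (hv23 : X.r23 v = 0)
    (hb23i : Injective Y.r23) (hb23s : Surjective Y.r23) (hb12i : Injective Y.r12)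
    (hxy : hom X Y ≠ 0) : False := by
  obtain ⟨hbX, heX⟩ := hX
  obtain ⟨hbY, heY⟩ := hY
  obtain ⟨f, hfmem, hfne⟩ := exists_nonzero_hom hxy
  obtain ⟨c13, c12, c23⟩ := hfmem
  have cD : f.2.2 ∘ₗ (X.r23 ∘ₗ X.r12) = (Y.r23 ∘ₗ Y.r12) ∘ₗ f.1 := by
    ext x
    simp only [LinearMap.comp_apply]
    have h1 : f.2.2 (X.r23 (X.r12 x)) = Y.r23 (f.2.1 (X.r12 x)) := by
      have := congrArg (fun g => g (X.r12 x)) c23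
      simpa using this
    have h2 : f.2.1 (X.r12 x) = Y.r12 (f.1 x) := by
      have := congrArg (fun g => g x) c12
      simpa using this
    rw [h1, h2]
  have hf3ne : f.2.2 ≠ 0 := by
    intro h0
    apply hfne
    have hf2 : f.2.1 = 0 := by
      ext x
      rw [LinearMap.zero_apply]
      refine hb23i ?_
      rw [map_zero]
      have h1 := congrArg (fun g => g x) c23
      simp only [LinearMap.comp_apply] at h1
      rw [h0] at h1
      simpa using h1.symm
    have hf1 : f.1 = 0 := by
      ext x
      rw [LinearMap.zero_apply]
      refine hb12i ?_
      rw [map_zero]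
      have h1 := congrArg (fun g => g x) c12
      simp only [LinearMap.comp_apply] at h1
      rw [hf2] at h1
      simpa using h1.symm
    have hsplit : f = (f.1, f.2.1, f.2.2) := rfl
    rw [hsplit, hf1, hf2, h0]
    rfl
  have hntX3 : Nontrivial X.V3 := by
    obtain ⟨x, hx⟩ := exists_apply_ne_zero hf3ne
    exact ⟨x, 0, fun h => hx (by rw [h, map_zero])⟩
  -- dimensions of Y
  have he23 : finrank k Y.V2 = finrank k Y.V3 :=
    (LinearEquiv.ofBijective Y.r23 ⟨hb23i, hb23s⟩).finrank_eq
  have hle12 : finrank k Y.V1 ≤ finrank k Y.V2 :=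
    LinearMap.finrank_le_finrank_of_injective hb12i
  have heuler := euler Y Y
  rw [hbY, heY, ← he23] at heuler
  have hdim2 : finrank k Y.V2 = finrank k Y.V1 + 1 := nat_sq1 _ _ heuler hle12
  have hdim3 : finrank k Y.V3 = finrank k Y.V1 + 1 := by rw [← he23]; exact hdim2
  -- mediator for Y
  obtain ⟨E23, hE23⟩ : ∃ E : Y.V2 ≃ₗ[k] Y.V3, ∀ x, E x = Y.r23 x :=
    ⟨LinearEquiv.ofBijective Y.r23 ⟨hb23i, hb23s⟩, fun _ => rfl⟩
  have Hmed : ∀ g1 : Y.V1 →ₗ[k] Y.V1, ∀ g3 : Y.V3 →ₗ[k] Y.V3,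
      g3 ∘ₗ (Y.r23 ∘ₗ Y.r12) = (Y.r23 ∘ₗ Y.r12) ∘ₗ g1 →
      ∃ g2 : Y.V2 →ₗ[k] Y.V2, g2 ∘ₗ Y.r12 = Y.r12 ∘ₗ g1 ∧ g3 ∘ₗ Y.r23 = Y.r23 ∘ₗ g2 := by
    intro g1 g3 hgd
    refine ⟨E23.symm.toLinearMap ∘ₗ g3 ∘ₗ Y.r23, ?_, ?_⟩
    · ext x
      simp only [LinearMap.comp_apply, LinearEquiv.coe_coe]
      have h1 : g3 (Y.r23 (Y.r12 x)) = Y.r23 (Y.r12 (g1 x)) := by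
        have := congrArg (fun f => f x) hgd
        simpa using this
      rw [h1]
      exact E23.symm_apply_eq.mpr (hE23 _).symm
    · ext x
      simp only [LinearMap.comp_apply, LinearEquiv.coe_coe]
      rw [show Y.r23 (E23.symm (g3 (Y.r23 x))) = E23 (E23.symm (g3 (Y.r23 x)))
        from (hE23 _).symm, E23.apply_symm_apply]
  have Hpi : ∀ lam mu : k, ¬(lam = 0 ∧ mu = 0) →
      Injective (lam • Y.r13 + mu • (Y.r23 ∘ₗ Y.r12)) :=
    fun lam mu h => pencil_inj Y hbY hb12i hb23i hdim3 Hmed lam mu h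
  -- X side
  have hrigX : Surjective (phi X X) := phi_surjective_of_ext1_eq_zero heX
  have hntX1 : Nontrivial X.V1 := nontrivial_V1_case1 X hbX v hv hv23 hntX3
  have h12s : Surjective X.r12 := r12_surj_case1 X hbX v hv hv23 hntX1
  obtain ⟨u0, hu0⟩ := h12s v
  have hDs : Surjective (X.r23 ∘ₗ X.r12) := comp_surj_case1 X hrigX v hv hv23 h12s
  have hu0ne : u0 ≠ 0 := by
    intro h
    rw [h, map_zero] at hu0
    exact hv hu0.symm
  have hww : (X.r23 ∘ₗ X.r12) u0 = 0 := by
    rw [LinearMap.comp_apply, hu0, hv23]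
  have hs13 : Surjective X.r13 := by
    have h := combo_surj X hrigX hDs u0 hu0ne hww 1 0 one_ne_zero
    have heq : (1 : k) • X.r13 + (0 : k) • (X.r23 ∘ₗ X.r12) = X.r13 := by simp
    rwa [heq] at h
  exact final_step X Y c13 cD hs13 hDs Hpi hf3ne

lemma core2 [IsAlgClosed k] (X Y : RepQ1 k) (hX : X.IsExceptional) (hY : Y.IsExceptional)
    (u : X.V1) (hu : u ≠ 0) (hu12 : X.r12 u = 0)
    (hb12i : Injective Y.r12) (hb12s : Surjective Y.r12) (hb23i : Injective Y.r23)
    (hxy : hom X Y ≠ 0) : False := by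
  obtain ⟨hbX, heX⟩ := hX
  obtain ⟨hbY, heY⟩ := hY
  obtain ⟨f, hfmem, hfne⟩ := exists_nonzero_hom hxy
  obtain ⟨c13, c12, c23⟩ := hfmem
  have cD : f.2.2 ∘ₗ (X.r23 ∘ₗ X.r12) = (Y.r23 ∘ₗ Y.r12) ∘ₗ f.1 := by
    ext x
    simp only [LinearMap.comp_apply]
    have h1 : f.2.2 (X.r23 (X.r12 x)) = Y.r23 (f.2.1 (X.r12 x)) := by
      have := congrArg (fun g => g (X.r12 x)) c23
      simpa using this
    have h2 : f.2.1 (X.r12 x) = Y.r12 (f.1 x) := by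
      have := congrArg (fun g => g x) c12
      simpa using this
    rw [h1, h2]
  have hf3ne : f.2.2 ≠ 0 := by
    intro h0
    apply hfne
    have hf2 : f.2.1 = 0 := by
      ext x
      rw [LinearMap.zero_apply]
      refine hb23i ?_
      rw [map_zero]
      have h1 := congrArg (fun g => g x) c23
      simp only [LinearMap.comp_apply] at h1
      rw [h0] at h1
      simpa using h1.symm
    have hf1 : f.1 = 0 := by
      ext x
      rw [LinearMap.zero_apply]
      refine hb12i ?_
      rw [map_zero]
      have h1 := congrArg (fun g => g x) c12
      simp only [LinearMap.comp_apply] at h1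
      rw [hf2] at h1
      simpa using h1.symm
    have hsplit : f = (f.1, f.2.1, f.2.2) := rfl
    rw [hsplit, hf1, hf2, h0]
    rfl
  have hntX3 : Nontrivial X.V3 := by
    obtain ⟨x, hx⟩ := exists_apply_ne_zero hf3ne
    exact ⟨x, 0, fun h => hx (by rw [h, map_zero])⟩
  have hntX1 : Nontrivial X.V1 := ⟨u, 0, hu⟩
  -- dimensions of Y
  have he12 : finrank k Y.V1 = finrank k Y.V2 :=
    (LinearEquiv.ofBijective Y.r12 ⟨hb12i, hb12s⟩).finrank_eq
  have hle23 : finrank k Y.V2 ≤ finrank k Y.V3 :=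
    LinearMap.finrank_le_finrank_of_injective hb23i
  have heuler := euler Y Y
  rw [hbY, heY, ← he12] at heuler
  have hle13 : finrank k Y.V1 ≤ finrank k Y.V3 := by
    rw [he12]; exact hle23
  have hdim3 : finrank k Y.V3 = finrank k Y.V1 + 1 := nat_sq2 _ _ heuler hle13
  -- mediator for Y
  obtain ⟨E12, hE12⟩ : ∃ E : Y.V1 ≃ₗ[k] Y.V2, ∀ x, E x = Y.r12 x :=
    ⟨LinearEquiv.ofBijective Y.r12 ⟨hb12i, hb12s⟩, fun _ => rfl⟩
  have Hmed : ∀ g1 : Y.V1 →ₗ[k] Y.V1, ∀ g3 : Y.V3 →ₗ[k] Y.V3,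
      g3 ∘ₗ (Y.r23 ∘ₗ Y.r12) = (Y.r23 ∘ₗ Y.r12) ∘ₗ g1 →
      ∃ g2 : Y.V2 →ₗ[k] Y.V2, g2 ∘ₗ Y.r12 = Y.r12 ∘ₗ g1 ∧ g3 ∘ₗ Y.r23 = Y.r23 ∘ₗ g2 := by
    intro g1 g3 hgd
    refine ⟨Y.r12 ∘ₗ g1 ∘ₗ E12.symm.toLinearMap, ?_, ?_⟩
    · ext x
      simp only [LinearMap.comp_apply, LinearEquiv.coe_coe]
      have h1 : E12.symm (Y.r12 x) = x := E12.symm_apply_eq.mpr (hE12 _).symm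
      rw [h1]
    · ext y
      obtain ⟨x, rfl⟩ := hb12s y
      simp only [LinearMap.comp_apply, LinearEquiv.coe_coe]
      have h1 : E12.symm (Y.r12 x) = x := E12.symm_apply_eq.mpr (hE12 _).symm
      rw [h1]
      have := congrArg (fun f => f x) hgd
      simpa using this
  have Hpi : ∀ lam mu : k, ¬(lam = 0 ∧ mu = 0) →
      Injective (lam • Y.r13 + mu • (Y.r23 ∘ₗ Y.r12)) :=
    fun lam mu h => pencil_inj Y hbY hb12i hb23i hdim3 Hmed lam mu h
  have hrigX : Surjective (phi X X) := phi_surjective_of_ext1_eq_zero heX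
  by_cases h2 : Subsingleton X.V2
  · -- degenerate case: middle space of X is zero
    have hs13 : Surjective X.r13 := r13_surj_sub2 X hbX hntX1 hntX3 h2
    have hf1 : f.1 = 0 := by
      ext x
      rw [LinearMap.zero_apply]
      refine hb12i ?_
      rw [map_zero]
      refine hb23i ?_
      rw [map_zero]
      have h1 := congrArg (fun g => g x) cD
      simp only [LinearMap.comp_apply] at h1
      rw [Subsingleton.elim (X.r12 x) (0 : X.V2), map_zero, map_zero] at h1
      exact h1.symm
    refine hf3ne ?_
    ext y
    obtain ⟨x, rfl⟩ := hs13 y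
    have h1 := congrArg (fun g => g x) c13
    simp only [LinearMap.comp_apply] at h1
    rw [h1, hf1]
    simp
  · have hntX2 : Nontrivial X.V2 := not_subsingleton_iff_nontrivial.mp h2
    have h13u : X.r13 u ≠ 0 := r13u_ne_zero_case2 X hbX u hu hu12 hntX3
    have h23s : Surjective X.r23 := r23_surj_case2 X hbX u hu12 h13u hntX2
    have hDs : Surjective (X.r23 ∘ₗ X.r12) := comp_surj_case2 X hrigX u hu hu12 h23s
    have hww : (X.r23 ∘ₗ X.r12) u = 0 := by
      rw [LinearMap.comp_apply, hu12, map_zero]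
    have hs13 : Surjective X.r13 := by
      have h := combo_surj X hrigX hDs u hu hww 1 0 one_ne_zero
      have heq : (1 : k) • X.r13 + (0 : k) • (X.r23 ∘ₗ X.r12) = X.r13 := by simp
      rwa [heq] at h
    exact final_step X Y c13 cD hs13 hDs Hpi hf3ne

end RepQ1
end Cores

/-- `Rep_k(Q1)` has RP property 1 and RP property 2 with respect to
its unique Ext-nontrivial couple `{M, M'}`. -/
theorem statement_10 (k : Type u) [Field k] [IsAlgClosed k] :
    (∀ X : RepQ1 k, X.IsExceptional →
      ((RepQ1.hom (Mrep k) X = 0 ∧ RepQ1.ext1 (Mrep k) X = 0) →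
        RepQ1.hom X (Mprep k) = 0 ∧ RepQ1.ext1 X (Mprep k) = 0) ∧
      ((RepQ1.hom (Mprep k) X = 0 ∧ RepQ1.ext1 (Mprep k) X = 0) →
        RepQ1.hom X (Mrep k) = 0 ∧ RepQ1.ext1 X (Mrep k) = 0)) ∧
    (∀ X Y : RepQ1 k, X.IsExceptional → Y.IsExceptional →
      ((RepQ1.hom (Mrep k) X ≠ 0 ∧ RepQ1.hom X Y ≠ 0 ∧
          RepQ1.hom (Mrep k) Y = 0 ∧ RepQ1.ext1 (Mrep k) Y = 0) →
        RepQ1.hom (Mprep k) Y ≠ 0) ∧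
      ((RepQ1.hom (Mprep k) X ≠ 0 ∧ RepQ1.hom X Y ≠ 0 ∧
          RepQ1.hom (Mprep k) Y = 0 ∧ RepQ1.ext1 (Mprep k) Y = 0) →
        RepQ1.hom (Mrep k) Y ≠ 0)) := by
  constructor
  · intro X _hX
    constructor
    · rintro ⟨h1, h2⟩
      exact RepQ1.hom_ext1_Mprep_eq_zero X ((RepQ1.hom_Mrep_eq_zero_iff X).mp h1)
        (RepQ1.r23_surjective_of_ext1_Mrep X h2)
    · rintro ⟨h1, h2⟩
      exact RepQ1.hom_ext1_Mrep_eq_zero X ((RepQ1.hom_Mprep_eq_zero_iff X).mp h1)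
        (RepQ1.r12_surjective_of_ext1_Mprep X h2)
  · intro X Y hX hY
    constructor
    · rintro ⟨hmx, hxy, hmy, emy⟩
      intro hMY'
      have hb12i := (RepQ1.hom_Mprep_eq_zero_iff Y).mp hMY'
      have hb23i := (RepQ1.hom_Mrep_eq_zero_iff Y).mp hmy
      have hb23s := RepQ1.r23_surjective_of_ext1_Mrep Y emy
      have hni : ¬ Function.Injective X.r23 :=
        fun hi => hmx ((RepQ1.hom_Mrep_eq_zero_iff X).mpr hi)
      obtain ⟨v, hvm, hv⟩ := Submodule.exists_mem_ne_zero_of_ne_bot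
        (fun hk => hni (LinearMap.ker_eq_bot.mp hk))
      exact RepQ1.core1 X Y hX hY v hv hvm hb23i hb23s hb12i hxy
    · rintro ⟨hmx, hxy, hmy, emy⟩
      intro hMY
      have hb23i := (RepQ1.hom_Mrep_eq_zero_iff Y).mp hMY
      have hb12i := (RepQ1.hom_Mprep_eq_zero_iff Y).mp hmy
      have hb12s := RepQ1.r12_surjective_of_ext1_Mprep Y emy
      have hni : ¬ Function.Injective X.r12 :=
        fun hi => hmx ((RepQ1.hom_Mprep_eq_zero_iff X).mpr hi)
      obtain ⟨u, hum, hu⟩ := Submodule.exists_mem_ne_zero_of_ne_bot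
        (fun hk => hni (LinearMap.ker_eq_bot.mp hk))
      exact RepQ1.core2 X Y hX hY u hu hum hb12i hb12s hb23i hxy
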